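/- For any codeword x ∈ △_n^{q−1} with exactly i nonzero coordinates, and integers 0 ≤ r ≤ min(h, i), the number of distinct vectors obtainable from x by r deletions followed by h − r insertions is at least C(i, r)·C(q − 1 + h − 2r, h − r). -/

import Mathlib

lemma my_card_sym {α : Type*} [DecidableEq α] (s : Finset α) (m : ℕ) :
    (s.sym m).card = (s.card + m - 1).choose m := by
  classical
  rw [← Fintype.card_coe s, ← Sym.card_sym_eq_choose (α := ↥s) m, ← Finset.card_univ]
  refine (Finset.card_bij (fun (w : Sym ↥s m) _ => Sym.map Subtype.val w) ?_ ?_ ?_).symm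
  · intro w _
    rw [Finset.mem_sym_iff]
    intro a ha
    obtain ⟨b, _, rfl⟩ := Sym.mem_map.1 ha
    exact b.2
  · intro w _ w' _ hww
    exact Sym.map_injective Subtype.val_injective _ hww
  · intro z hz
    refine ⟨Sym.map (fun a => ⟨a.1, Finset.mem_sym_iff.1 hz a.1 a.2⟩) z.attach,
      Finset.mem_univ _, ?_⟩
    show Sym.map _ (Sym.map _ z.attach) = z
    rw [Sym.map_map]
    exact Sym.attach_map_coe z

lemma my_card_piAntidiag {α : Type*} [DecidableEq α] (s : Finset α) (m : ℕ) :
    (Finset.piAntidiag s m).card = (s.card + m - 1).choose m := by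
  rw [← Finset.map_sym_eq_piAntidiag, Finset.card_map, my_card_sym]

/-- For `x ∈ △_n^{q−1}` with exactly `i` nonzero coordinates and
`0 ≤ r ≤ min(h, i)`, the number of vectors obtainable from `x` by `r` deletions
followed by `h − r` insertions is at least `C(i, r)·C(q − 1 + h − 2r, h − r)`. -/
theorem stmt_19 (q n h r i : ℕ) (hq : 2 ≤ q) (hh : 1 ≤ h) (hn : h ≤ n)
    (hr : r ≤ h) (hri : r ≤ i)
    (x : Fin q → ℤ) (hx : ∀ j, 0 ≤ x j) (hxs : ∑ j, x j = n)
    (hi : (Finset.univ.filter fun j => x j ≠ 0).card = i) :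
    i.choose r * (q - 1 + h - 2 * r).choose (h - r) ≤
      Set.ncard {z : Fin q → ℤ | ∃ f g : Fin q → ℤ,
        (∀ j, 0 ≤ f j) ∧ (∀ j, 0 ≤ g j) ∧
        (∑ j, f j = (r : ℤ)) ∧ (∑ j, g j = ((h - r : ℕ) : ℤ)) ∧
        f ≤ x ∧ z = x - f + g} := by
  classical
  set m := h - r with hm
  set supp := (Finset.univ.filter fun j => x j ≠ 0) with hsupp
  have hiq : i ≤ q := by
    rw [← hi]
    calc supp.card ≤ (Finset.univ : Finset (Fin q)).card := Finset.card_filter_le _ _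
      _ = q := by simp
  have hrq : r ≤ q := hri.trans hiq
  set ind : Finset (Fin q) → (Fin q → ℤ) := fun A j => if j ∈ A then 1 else 0 with hind
  set φ : Finset (Fin q) → (Fin q → ℕ) → (Fin q → ℤ) :=
    fun A t => x - ind A + fun j => (t j : ℤ) with hφ
  set Z : Finset (Fin q → ℤ) :=
    (supp.powersetCard r).biUnion
      (fun A => (Finset.piAntidiag Aᶜ m).image (φ A)) with hZ
  -- recovery of A from the value
  have key : ∀ A, ∀ t ∈ Finset.piAntidiag Aᶜ m, ∀ j, (φ A t j < x j ↔ j ∈ A) := by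
    intro A t ht j
    obtain ⟨hts, htsupp⟩ := Finset.mem_piAntidiag.1 ht
    by_cases hj : j ∈ A
    · have ht0 : t j = 0 := by
        by_contra h0
        exact (Finset.mem_compl.1 (htsupp j h0)) hj
      simp only [hφ, hind, Pi.add_apply, Pi.sub_apply, hj, if_pos, ht0]
      simp
    · have : (0:ℤ) ≤ (t j : ℤ) := Int.natCast_nonneg _
      simp only [hφ, hind, Pi.add_apply, Pi.sub_apply]
      simp [hj]
  -- each image has the right cardinality
  have himg : ∀ A ∈ supp.powersetCard r,
      ((Finset.piAntidiag Aᶜ m).image (φ A)).card = (q - r + m - 1).choose m := by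
    intro A hA
    have hinj : Set.InjOn (φ A) (Finset.piAntidiag Aᶜ m) := by
      intro t _ t' _ htt
      funext j
      have := congrFun htt j
      simp only [hφ, Pi.add_apply, Pi.sub_apply, add_right_inj, add_left_inj] at this
      exact_mod_cast this
    rw [Finset.card_image_of_injOn hinj, my_card_piAntidiag, Finset.card_compl,
      Fintype.card_fin, (Finset.mem_powersetCard.1 hA).2]
  have hZcard : Z.card = i.choose r * (q - r + m - 1).choose m := by
    rw [hZ, Finset.card_biUnion]
    · rw [Finset.sum_congr rfl himg, Finset.sum_const, Finset.card_powersetCard, hi,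
        smul_eq_mul]
    · intro A hA B hB hAB
      simp only [Function.onFun]
      rw [Finset.disjoint_left]
      intro z hzA hzB
      obtain ⟨t, ht, hzt⟩ := Finset.mem_image.1 hzA
      obtain ⟨t', ht', hzt'⟩ := Finset.mem_image.1 hzB
      apply hAB
      ext j
      rw [← key A t ht j, ← key B t' ht' j, hzt, hzt']
  -- Z is contained in the set
  have hsub : ↑Z ⊆ {z : Fin q → ℤ | ∃ f g : Fin q → ℤ,
      (∀ j, 0 ≤ f j) ∧ (∀ j, 0 ≤ g j) ∧
      (∑ j, f j = (r : ℤ)) ∧ (∑ j, g j = ((h - r : ℕ) : ℤ)) ∧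
      f ≤ x ∧ z = x - f + g} := by
    intro z hz
    rw [Finset.mem_coe, hZ, Finset.mem_biUnion] at hz
    obtain ⟨A, hA, hz⟩ := hz
    obtain ⟨t, ht, rfl⟩ := Finset.mem_image.1 hz
    obtain ⟨hAsupp, hAcard⟩ := Finset.mem_powersetCard.1 hA
    obtain ⟨hts, htsupp⟩ := Finset.mem_piAntidiag.1 ht
    have htuniv : ∑ j, t j = m := by
      rw [← hts]
      symm
      apply Finset.sum_subset (Finset.subset_univ _)
      intro j _ hj
      by_contra h0
      exact hj (htsupp j h0)
    refine ⟨ind A, (fun j => (t j : ℤ)), ?_, ?_, ?_, ?_, ?_, rfl⟩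
    · intro j; by_cases hj : j ∈ A <;> simp [hind, hj]
    · intro j; exact Int.natCast_nonneg _
    · simp only [hind]
      rw [Finset.sum_ite_mem, Finset.univ_inter, Finset.sum_const, hAcard]
      simp
    · rw [← Nat.cast_sum, htuniv]
    · intro j
      by_cases hj : j ∈ A
      · have hjs : j ∈ supp := hAsupp hj
        have h1 : x j ≠ 0 := (Finset.mem_filter.1 hjs).2
        have h2 := hx j
        simp only [hind, hj, if_pos]
        omega
      · simp only [hind, hj, if_neg, not_false_iff]
        simpa using hx j
  -- the set is finite
  have hSfin : Set.Finite {z : Fin q → ℤ | ∃ f g : Fin q → ℤ,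
      (∀ j, 0 ≤ f j) ∧ (∀ j, 0 ≤ g j) ∧
      (∑ j, f j = (r : ℤ)) ∧ (∑ j, g j = ((h - r : ℕ) : ℤ)) ∧
      f ≤ x ∧ z = x - f + g} := by
    apply Set.Finite.subset
      ((((Set.finite_Icc (0 : Fin q → ℤ) x)).prod
        (Set.finite_Icc (0 : Fin q → ℤ) (fun _ => (h : ℤ)))).image
        (fun p : (Fin q → ℤ) × (Fin q → ℤ) => x - p.1 + p.2))
    rintro z ⟨f, g, hf0, hg0, hfs, hgs, hfx, rfl⟩
    refine ⟨(f, g), ⟨⟨fun j => hf0 j, hfx⟩, ⟨fun j => hg0 j, fun j => ?_⟩⟩, rfl⟩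
    have h1 : g j ≤ ((h - r : ℕ) : ℤ) := by
      rw [← hgs]
      exact Finset.single_le_sum (fun k _ => hg0 k) (Finset.mem_univ j)
    have h2 : ((h - r : ℕ) : ℤ) ≤ (h : ℤ) := by exact_mod_cast Nat.sub_le h r
    exact h1.trans h2
  have harg : q - 1 + h - 2 * r = q - r + m - 1 := by omega
  calc i.choose r * (q - 1 + h - 2 * r).choose (h - r)
      = Z.card := by rw [hZcard, harg]
    _ = (↑Z : Set (Fin q → ℤ)).ncard := (Set.ncard_coe_finset Z).symm
    _ ≤ _ := Set.ncard_le_ncard hsub hSfin
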